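/- Let (W, θ) be a nondegenerate TLN with uniform input θ > 0, with a partition τ_1,...,τ_N such that both every τ_ℓ and every complement [n]\τ_ℓ is simply-embedded (strongly simply-embedded: for each node j ∈ τ_ℓ, W_{ij} takes a common value γ_j for all i ∉ τ_ℓ). For σ ⊆ [n] with σ_ℓ = σ∩τ_ℓ and I = {ℓ : σ_ℓ ≠ ∅}, the Cramer determinants fully factor: for every i ∈ [n], s_i^σ = θ^{1−|I|} · Π_{ℓ∈I} s_i^{σ_ℓ}, and s_i^{σ_ℓ} takes the same value for all i ∈ [n]\τ_ℓ. -/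

import Mathlib

/-- Cramer's determinant s_i^σ = det((I - W_{σ∪{i}})_i ; θ·𝟙). -/
noncomputable def sdet {ι : Type*} [Fintype ι] [DecidableEq ι]
    (W : Matrix ι ι ℝ) (θ : ℝ) (σ : Finset ι) (i : ι) : ℝ :=
  Matrix.det (Matrix.of (fun a b : {x // x ∈ insert i σ} =>
    if (b : ι) = i then θ
    else (if (a : ι) = (b : ι) then (1 : ℝ) else 0) - W (a : ι) (b : ι)))

open Matrix Finset

lemma det_rowop {κ : Type*} [Fintype κ] [DecidableEq κ] (M : Matrix κ κ ℝ) (i0 : κ) :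
    (Matrix.of fun a b => if a = i0 then M a b else M a b - M i0 b).det = M.det := by
  apply Matrix.det_eq_of_forall_row_eq_smul_add_const
      (fun a => if a = i0 then 0 else -1) i0 (by simp)
  intro a b
  by_cases h : a = i0 <;> simp [h] <;> ring

lemma det_block {κ : Type*} [Fintype κ] [DecidableEq κ] (M : Matrix κ κ ℝ)
    (p : κ → Prop) [DecidablePred p]
    (h : ∀ a b, p a → ¬ p b → M a b = 0) :
    M.det = (Matrix.of fun a b : {x // p x} => M a.1 b.1).det *
      (Matrix.of fun a b : {x // ¬ p x} => M a.1 b.1).det := by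
  rw [← Matrix.det_submatrix_equiv_self (Equiv.sumCompl p) M]
  have hM : M.submatrix (Equiv.sumCompl p) (Equiv.sumCompl p) =
      Matrix.fromBlocks (Matrix.of fun a b : {x // p x} => M a.1 b.1) 0
        (Matrix.of fun (a : {x // ¬ p x}) (b : {x // p x}) => M a.1 b.1)
        (Matrix.of fun a b : {x // ¬ p x} => M a.1 b.1) := by
    ext a b
    rcases a with a | a <;> rcases b with b | b
    · simp
    · simpa using h a.1 b.1 a.2 b.2
    · simp
    · simp
  rw [hM, Matrix.det_fromBlocks_zero₁₂]

lemma det_congr_equiv {κ κ' : Type*} [Fintype κ] [DecidableEq κ] [Fintype κ'] [DecidableEq κ']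
    (e : κ ≃ κ') (M : Matrix κ κ ℝ) (M' : Matrix κ' κ' ℝ)
    (h : ∀ a b, M a b = M' (e a) (e b)) : M.det = M'.det := by
  rw [← Matrix.det_submatrix_equiv_self e M']
  congr 1
  ext a b
  rw [Matrix.submatrix_apply]
  exact h a b

lemma sdet_empty {n : ℕ} (W : Matrix (Fin n) (Fin n) ℝ) (θ : ℝ) (i : Fin n) :
    sdet W θ (∅ : Finset (Fin n)) i = θ := by
  unfold sdet
  haveI : Unique {x // x ∈ insert i (∅ : Finset (Fin n))} :=
    ⟨⟨⟨i, Finset.mem_insert_self _ _⟩⟩, fun a => Subtype.ext ((Finset.mem_insert.mp a.2).resolve_right (fun h => absurd h (Finset.notMem_empty _)))⟩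
  rw [Matrix.det_unique, Matrix.of_apply, if_pos]
  exact (Finset.mem_insert.mp (default : {x // x ∈ insert i (∅ : Finset (Fin n))}).2).resolve_right
    (fun h => absurd h (Finset.notMem_empty _))

noncomputable def Dmat {n : ℕ} (W : Matrix (Fin n) (Fin n) ℝ) (i : Fin n) (s : Finset (Fin n)) :
    Matrix {x // x ∈ s.erase i} {x // x ∈ s.erase i} ℝ :=
  Matrix.of fun a b => (if (a : Fin n) = (b : Fin n) then (1 : ℝ) else 0) - W a b + W i b

lemma sdet_eq_theta_mul_det {n : ℕ} (W : Matrix (Fin n) (Fin n) ℝ) (θ : ℝ)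
    (s : Finset (Fin n)) (i : Fin n) :
    sdet W θ s i = θ * (Dmat W i s).det := by
  unfold sdet
  set M : Matrix {x // x ∈ insert i s} {x // x ∈ insert i s} ℝ :=
    Matrix.of (fun a b => if (b : Fin n) = i then θ
      else (if (a : Fin n) = (b : Fin n) then (1 : ℝ) else 0) - W a b) with hMdef
  set i0 : {x // x ∈ insert i s} := ⟨i, Finset.mem_insert_self i s⟩ with hi0
  rw [← det_rowop M i0]
  rw [det_block (Matrix.of fun a b => if a = i0 then M a b else M a b - M i0 b)
      (fun a => (a : Fin n) ≠ i)
      (by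
        intro a b ha hb
        have hb' : (b : Fin n) = i := not_not.mp hb
        have hai0 : a ≠ i0 := fun hh => ha (by rw [hh])
        simp only [Matrix.of_apply, if_neg hai0, hMdef]
        rw [if_pos hb', if_pos hb', sub_self])]
  have hP : (Matrix.of fun a b : {a : {x // x ∈ insert i s} // (a : Fin n) ≠ i} =>
      (Matrix.of fun a b => if a = i0 then M a b else M a b - M i0 b) a.1 b.1).det
      = (Dmat W i s).det := by
    refine det_congr_equiv
      ⟨fun a => ⟨a.1.1, Finset.mem_erase.mpr ⟨a.2, (Finset.mem_insert.mp a.1.2).resolve_left a.2⟩⟩,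
       fun x => ⟨⟨x.1, Finset.mem_insert_of_mem (Finset.mem_of_mem_erase x.2)⟩,
         (Finset.mem_erase.mp x.2).1⟩,
       fun a => Subtype.ext (Subtype.ext rfl), fun x => rfl⟩ _ _ ?_
    intro a b
    have hai0 : a.1 ≠ i0 := fun hh => a.2 (by rw [hh])
    have hbi : (b.1 : Fin n) ≠ i := b.2
    have hib : i ≠ (b.1 : Fin n) := fun hh => hbi hh.symm
    simp only [Matrix.of_apply, Equiv.coe_fn_mk, Dmat, if_neg hai0, hMdef,
      if_neg hbi, if_neg hib]
    rw [show (i0 : Fin n) = i from rfl, if_neg hib]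
    ring
  have hQ : (Matrix.of fun a b : {a : {x // x ∈ insert i s} // ¬ (a : Fin n) ≠ i} =>
      (Matrix.of fun a b => if a = i0 then M a b else M a b - M i0 b) a.1 b.1).det = θ := by
    haveI : Unique {a : {x // x ∈ insert i s} // ¬ (a : Fin n) ≠ i} :=
      ⟨⟨⟨i0, by simp [hi0]⟩⟩, fun a => Subtype.ext (Subtype.ext (by
        have := not_not.mp a.2
        simp [this, hi0]))⟩
    rw [Matrix.det_unique]
    have hd : ((default : {a : {x // x ∈ insert i s} // ¬ (a : Fin n) ≠ i}).1 : Fin n) = i :=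
      not_not.mp (default : {a : {x // x ∈ insert i s} // ¬ (a : Fin n) ≠ i}).2
    have hdd : (default : {a : {x // x ∈ insert i s} // ¬ (a : Fin n) ≠ i}).1 = i0 :=
      Subtype.ext (by rw [hd, hi0])
    simp only [Matrix.of_apply, if_pos hdd, hMdef]
    rw [if_pos hd]
  rw [hP, hQ]
  ring

lemma sdet_union {n : ℕ} (W : Matrix (Fin n) (Fin n) ℝ) (θ : ℝ)
    (σ1 σ2 : Finset (Fin n)) (i : Fin n)
    (hd : Disjoint σ1 σ2) (hi : i ∉ σ2)
    (hW : ∀ j ∈ σ2, ∀ a ∈ σ1, W a j = W i j) :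
    sdet W θ (σ1 ∪ σ2) i = (Dmat W i σ1).det * sdet W θ σ2 i := by
  unfold sdet
  set M : Matrix {x // x ∈ insert i (σ1 ∪ σ2)} {x // x ∈ insert i (σ1 ∪ σ2)} ℝ :=
    Matrix.of (fun a b => if (b : Fin n) = i then θ
      else (if (a : Fin n) = (b : Fin n) then (1 : ℝ) else 0) - W a b) with hMdef
  set M2 : Matrix {x // x ∈ insert i σ2} {x // x ∈ insert i σ2} ℝ :=
    Matrix.of (fun a b => if (b : Fin n) = i then θ
      else (if (a : Fin n) = (b : Fin n) then (1 : ℝ) else 0) - W a b) with hM2def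
  set i0 : {x // x ∈ insert i (σ1 ∪ σ2)} := ⟨i, Finset.mem_insert_self i _⟩ with hi0
  set i2 : {x // x ∈ insert i σ2} := ⟨i, Finset.mem_insert_self i _⟩ with hi2
  rw [← det_rowop M i0]
  rw [det_block (Matrix.of fun a b => if a = i0 then M a b else M a b - M i0 b)
      (fun a : {x // x ∈ insert i (σ1 ∪ σ2)} => (a : Fin n) ∈ σ1 ∧ (a : Fin n) ≠ i)
      (by
        intro a b ha hb
        have hai0 : a ≠ i0 := fun hh => ha.2 (by rw [hh])
        simp only [Matrix.of_apply, if_neg hai0, hMdef]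
        by_cases hbi : (b : Fin n) = i
        · rw [if_pos hbi, if_pos hbi, sub_self]
        · have hbσ2 : (b : Fin n) ∈ σ2 := by
            rcases Finset.mem_insert.mp b.2 with h | h
            · exact absurd h hbi
            · rcases Finset.mem_union.mp h with h1 | h2
              · exact absurd ⟨h1, hbi⟩ hb
              · exact h2
          have hab : (a : Fin n) ≠ (b : Fin n) := fun hh =>
            (Finset.disjoint_left.mp hd ha.1) (hh ▸ hbσ2)
          have hib : i ≠ (b : Fin n) := fun hh => hi (hh ▸ hbσ2)
          rw [if_neg hbi, if_neg hbi, if_neg hab, if_neg hib, hW b hbσ2 a ha.1]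
          ring)]
  have hP : (Matrix.of fun a b : {a : {x // x ∈ insert i (σ1 ∪ σ2)} //
        (a : Fin n) ∈ σ1 ∧ (a : Fin n) ≠ i} =>
      (Matrix.of fun a b => if a = i0 then M a b else M a b - M i0 b) a.1 b.1).det
      = (Dmat W i σ1).det := by
    refine det_congr_equiv
      ⟨fun a => ⟨a.1.1, Finset.mem_erase.mpr ⟨a.2.2, a.2.1⟩⟩,
       fun x => ⟨⟨x.1, Finset.mem_insert_of_mem
            (Finset.mem_union_left _ (Finset.mem_of_mem_erase x.2))⟩,
         ⟨Finset.mem_of_mem_erase x.2, (Finset.mem_erase.mp x.2).1⟩⟩,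
       fun a => Subtype.ext (Subtype.ext rfl), fun x => rfl⟩ _ _ ?_
    intro a b
    have hai0 : a.1 ≠ i0 := fun hh => a.2.2 (by rw [hh])
    have hbi : (b.1 : Fin n) ≠ i := b.2.2
    have hib : i ≠ (b.1 : Fin n) := fun hh => hbi hh.symm
    simp only [Matrix.of_apply, Equiv.coe_fn_mk, Dmat, if_neg hai0, hMdef,
      if_neg hbi, if_neg hib]
    rw [show (i0 : Fin n) = i from rfl, if_neg hib]
    ring
  have hQ : (Matrix.of fun a b : {a : {x // x ∈ insert i (σ1 ∪ σ2)} //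
        ¬ ((a : Fin n) ∈ σ1 ∧ (a : Fin n) ≠ i)} =>
      (Matrix.of fun a b => if a = i0 then M a b else M a b - M i0 b) a.1 b.1).det
      = M2.det := by
    rw [← det_rowop M2 i2]
    refine det_congr_equiv
      ⟨fun a => ⟨a.1.1, by
        rcases Finset.mem_insert.mp a.1.2 with h | h
        · exact Finset.mem_insert.mpr (Or.inl h)
        · rcases Finset.mem_union.mp h with h1 | h2
          · by_cases hai : (a.1.1 : Fin n) = i
            · exact Finset.mem_insert.mpr (Or.inl hai)
            · exact absurd ⟨h1, hai⟩ a.2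
          · exact Finset.mem_insert_of_mem h2⟩,
       fun x => ⟨⟨x.1, by
          rcases Finset.mem_insert.mp x.2 with h | h
          · exact Finset.mem_insert.mpr (Or.inl h)
          · exact Finset.mem_insert_of_mem (Finset.mem_union_right _ h)⟩, by
          rintro ⟨hp1, hp2⟩
          rcases Finset.mem_insert.mp x.2 with h | h
          · exact hp2 h
          · exact (Finset.disjoint_left.mp hd hp1) h⟩,
       fun a => Subtype.ext (Subtype.ext rfl), fun x => rfl⟩ _ _ ?_
    intro a b
    simp only [Matrix.of_apply, Equiv.coe_fn_mk, hMdef, hM2def, hi0, hi2, Subtype.ext_iff]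
  rw [hP, hQ]

lemma sdet_split {n : ℕ} (W : Matrix (Fin n) (Fin n) ℝ) (θ : ℝ)
    (σ1 σ2 : Finset (Fin n)) (i : Fin n)
    (hd : Disjoint σ1 σ2) (hi : i ∉ σ2)
    (hW : ∀ j ∈ σ2, ∀ a ∈ σ1, W a j = W i j) :
    θ * sdet W θ (σ1 ∪ σ2) i = sdet W θ σ1 i * sdet W θ σ2 i := by
  rw [sdet_union W θ σ1 σ2 i hd hi hW, sdet_eq_theta_mul_det W θ σ1 i]
  ring

lemma sdet_invariant {n : ℕ} (W : Matrix (Fin n) (Fin n) ℝ) (θ : ℝ)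
    (ρ : Finset (Fin n)) (i i' : Fin n) (hi : i ∉ ρ) (hi' : i' ∉ ρ)
    (hW : ∀ j ∈ ρ, W i j = W i' j) : sdet W θ ρ i = sdet W θ ρ i' := by
  unfold sdet
  have hiff : ∀ x : Fin n, x ∈ insert i ρ ↔ Equiv.swap i i' x ∈ insert i' ρ := by
    intro x
    by_cases hx : x = i
    · simp [hx, Equiv.swap_apply_left]
    · by_cases hx' : x = i'
      · subst hx'
        rw [Equiv.swap_apply_right]
        simp only [Finset.mem_insert]
        constructor
        · rintro (h | h)
          · exact absurd h hx
          · exact absurd h hi'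
        · rintro (h | h)
          · exact Or.inl h.symm
          · exact absurd h hi
      · rw [Equiv.swap_apply_of_ne_of_ne hx hx']
        simp [Finset.mem_insert, hx, hx']
  apply det_congr_equiv ((Equiv.swap i i').subtypeEquiv hiff)
  intro a b
  simp only [Matrix.of_apply, Equiv.subtypeEquiv_apply]
  by_cases hbi : (b : Fin n) = i
  · simp [hbi, Equiv.swap_apply_left]
  · have hbρ : (b : Fin n) ∈ ρ := (Finset.mem_insert.mp b.2).resolve_left hbi
    have hbi' : (b : Fin n) ≠ i' := fun h => hi' (h ▸ hbρ)
    simp only [Equiv.swap_apply_of_ne_of_ne hbi hbi']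
    rw [if_neg hbi, if_neg hbi']
    by_cases hai : (a : Fin n) = i
    · simp only [hai, Equiv.swap_apply_left]
      have h1 : i ≠ (b : Fin n) := fun h => hbi h.symm
      have h2 : i' ≠ (b : Fin n) := fun h => hbi' h.symm
      rw [if_neg h1, if_neg h2, hW _ hbρ]
    · have haρ : (a : Fin n) ∈ ρ := (Finset.mem_insert.mp a.2).resolve_left hai
      have hai' : (a : Fin n) ≠ i' := fun h => hi' (h ▸ haρ)
      simp only [Equiv.swap_apply_of_ne_of_ne hai hai']

lemma part_a {n N : ℕ} (W : Matrix (Fin n) (Fin n) ℝ) (θ : ℝ) (hθ : θ ≠ 0)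
    (τ : Fin N → Finset (Fin n))
    (hdisj : ∀ ℓ ℓ', ℓ ≠ ℓ' → Disjoint (τ ℓ) (τ ℓ'))
    (hcover : ∀ i : Fin n, ∃ ℓ, i ∈ τ ℓ)
    (hsse : ∀ ℓ, ∀ j ∈ τ ℓ, ∀ i ∉ τ ℓ, ∀ i' ∉ τ ℓ, W i j = W i' j)
    (σ : Finset (Fin n)) :
    ∀ i : Fin n, sdet W θ σ i =
        θ ^ (1 - (((Finset.univ.filter fun ℓ : Fin N => (σ ∩ τ ℓ).Nonempty).card : ℤ))) *
          ∏ ℓ ∈ Finset.univ.filter (fun ℓ : Fin N => (σ ∩ τ ℓ).Nonempty),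
            sdet W θ (σ ∩ τ ℓ) i := by
  induction σ using Finset.strongInduction with
  | _ σ ih =>
  intro i
  rcases σ.eq_empty_or_nonempty with rfl | ⟨k, hk⟩
  · simp [sdet_empty]
  · obtain ⟨ℓ0, hk0⟩ := hcover k
    set I := Finset.univ.filter fun ℓ : Fin N => (σ ∩ τ ℓ).Nonempty with hI
    have hmem : ℓ0 ∈ I := by
      rw [hI, Finset.mem_filter]
      exact ⟨Finset.mem_univ _, ⟨k, Finset.mem_inter.mpr ⟨hk, hk0⟩⟩⟩
    have hdisj01 : Disjoint (σ ∩ τ ℓ0) (σ \ τ ℓ0) :=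
      Finset.disjoint_left.mpr (fun a ha hb => (Finset.mem_sdiff.mp hb).2 (Finset.mem_inter.mp ha).2)
    have hkey : θ * sdet W θ σ i = sdet W θ (σ ∩ τ ℓ0) i * sdet W θ (σ \ τ ℓ0) i := by
      by_cases hiτ : i ∈ τ ℓ0
      · have hW1 : ∀ j ∈ σ \ τ ℓ0, ∀ a ∈ σ ∩ τ ℓ0, W a j = W i j := by
          intro j hj a ha
          obtain ⟨m, hm⟩ := hcover j
          have hm0 : m ≠ ℓ0 := fun h => (Finset.mem_sdiff.mp hj).2 (h ▸ hm)
          have hanot : a ∉ τ m := fun h =>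
            (Finset.disjoint_left.mp (hdisj ℓ0 m (fun hh => hm0 hh.symm))
              (Finset.mem_inter.mp ha).2) h
          have hinot : i ∉ τ m := fun h =>
            (Finset.disjoint_left.mp (hdisj ℓ0 m (fun hh => hm0 hh.symm)) hiτ) h
          exact hsse m j hm a hanot i hinot
        have := sdet_split W θ (σ ∩ τ ℓ0) (σ \ τ ℓ0) i hdisj01
          (fun h => (Finset.mem_sdiff.mp h).2 hiτ) hW1
        rwa [Finset.union_comm, Finset.sdiff_union_inter] at this
      · have hW2 : ∀ j ∈ σ ∩ τ ℓ0, ∀ a ∈ σ \ τ ℓ0, W a j = W i j := fun j hj a ha =>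
          hsse ℓ0 j (Finset.mem_inter.mp hj).2 a (Finset.mem_sdiff.mp ha).2 i hiτ
        have := sdet_split W θ (σ \ τ ℓ0) (σ ∩ τ ℓ0) i hdisj01.symm
          (fun h => hiτ (Finset.mem_inter.mp h).2) hW2
        rw [Finset.sdiff_union_inter] at this
        rw [this]; ring
    have hss : σ \ τ ℓ0 ⊂ σ :=
      (Finset.ssubset_iff_of_subset (Finset.sdiff_subset)).mpr
        ⟨k, hk, fun h => (Finset.mem_sdiff.mp h).2 hk0⟩
    have hinter : ∀ ℓ, ℓ ≠ ℓ0 → (σ \ τ ℓ0) ∩ τ ℓ = σ ∩ τ ℓ := by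
      intro ℓ hne
      ext a
      simp only [Finset.mem_inter, Finset.mem_sdiff]
      constructor
      · rintro ⟨⟨h1, _⟩, h3⟩; exact ⟨h1, h3⟩
      · rintro ⟨h1, h3⟩
        exact ⟨⟨h1, fun h => (Finset.disjoint_left.mp (hdisj ℓ ℓ0 hne) h3) h⟩, h3⟩
    have hfil : (Finset.univ.filter fun ℓ : Fin N => ((σ \ τ ℓ0) ∩ τ ℓ).Nonempty)
        = I.erase ℓ0 := by
      ext ℓ
      simp only [Finset.mem_filter, Finset.mem_univ, true_and, Finset.mem_erase, hI]
      constructor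
      · rintro ⟨a, ha⟩
        have h1 := Finset.mem_inter.mp ha
        have h2 := Finset.mem_sdiff.mp h1.1
        exact ⟨fun h => h2.2 (h ▸ h1.2), ⟨a, Finset.mem_inter.mpr ⟨h2.1, h1.2⟩⟩⟩
      · rintro ⟨hne, hne2⟩
        obtain ⟨a, ha⟩ := hne2
        rw [hinter ℓ hne]
        exact ⟨a, ha⟩
    have ih' := ih (σ \ τ ℓ0) hss i
    rw [hfil] at ih'
    have hprod : ∏ ℓ ∈ I.erase ℓ0, sdet W θ ((σ \ τ ℓ0) ∩ τ ℓ) i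
        = ∏ ℓ ∈ I.erase ℓ0, sdet W θ (σ ∩ τ ℓ) i :=
      Finset.prod_congr rfl (fun ℓ hℓ => by rw [hinter ℓ (Finset.mem_erase.mp hℓ).1])
    rw [hprod] at ih'
    have h1le : 1 ≤ I.card := Finset.card_pos.mpr ⟨ℓ0, hmem⟩
    have hcard : (1 : ℤ) - ((I.erase ℓ0).card : ℤ) = 1 + (1 - (I.card : ℤ)) := by
      rw [Finset.card_erase_of_mem hmem, Nat.cast_sub h1le]
      push_cast
      ring
    apply mul_left_cancel₀ hθ
    rw [hkey, ih', hcard, ← Finset.mul_prod_erase I _ hmem, zpow_add₀ hθ, zpow_one]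
    ring

/-- Full factorization for strongly simply-embedded partitions (TLN version): if the
nodes of a nondegenerate TLN (W, θ), θ > 0 uniform, are partitioned into
τ_1,...,τ_N such that every node j ∈ τ_ℓ sends a common weight γ_j to all nodes
outside τ_ℓ, then for σ ⊆ [n] with σ_ℓ = σ ∩ τ_ℓ and I = {ℓ : σ_ℓ ≠ ∅}:
s_i^σ = θ^{1-|I|}·Π_{ℓ∈I} s_i^{σ_ℓ} for every i ∈ [n], and s_i^{σ_ℓ} takes the
same value for all i ∉ τ_ℓ. -/
theorem strongly_simply_embedded_full_factorization (n N : ℕ)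
    (W : Matrix (Fin n) (Fin n) ℝ) (θ : ℝ) (hθ : 0 < θ)
    (τ : Fin N → Finset (Fin n))
    (hdisj : ∀ ℓ ℓ', ℓ ≠ ℓ' → Disjoint (τ ℓ) (τ ℓ'))
    (hcover : ∀ i : Fin n, ∃ ℓ, i ∈ τ ℓ)
    (hsse : ∀ ℓ, ∀ j ∈ τ ℓ, ∀ i ∉ τ ℓ, ∀ i' ∉ τ ℓ, W i j = W i' j)
    (hnd : ∀ (ρ : Finset (Fin n)) (i : Fin n), sdet W θ ρ i ≠ 0)
    (σ : Finset (Fin n)) :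
    (∀ i : Fin n, sdet W θ σ i =
        θ ^ (1 - (((Finset.univ.filter fun ℓ : Fin N => (σ ∩ τ ℓ).Nonempty).card : ℤ))) *
          ∏ ℓ ∈ Finset.univ.filter (fun ℓ : Fin N => (σ ∩ τ ℓ).Nonempty),
            sdet W θ (σ ∩ τ ℓ) i) ∧
    (∀ ℓ, ∀ i ∉ τ ℓ, ∀ i' ∉ τ ℓ, sdet W θ (σ ∩ τ ℓ) i = sdet W θ (σ ∩ τ ℓ) i') := by
  constructor
  · exact part_a W θ (ne_of_gt hθ) τ hdisj hcover hsse σ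
  · intro ℓ i hi i' hi'
    apply sdet_invariant W θ (σ ∩ τ ℓ) i i'
      (fun h => hi (Finset.mem_inter.mp h).2) (fun h => hi' (Finset.mem_inter.mp h).2)
    intro j hj
    exact hsse ℓ j (Finset.mem_inter.mp hj).2 i hi i' hi'
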